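/- On the standard n-simplex Δⁿ = {(t₀,…,tₙ) : tᵢ ≥ 0, Σtᵢ = 1}, the elementary Whitney forms ω_{i₀…i_k} = k! Σ_{j=0}^{k} (−1)^j t_{i_j} dt_{i₀} ∧ ⋯ ∧ \widehat{dt_{i_j}} ∧ ⋯ ∧ dt_{i_k} satisfy the differential identity d ω_{i₀…i_k} = Σ_{i=0}^{n} ω_{i i₀ … i_k}. -/

import Mathlib

/-- The elementary Whitney form `ω_{σ(0)…σ(k)} = k! Σⱼ (−1)^j t_{σ(j)}
dt_{σ(0)} ⋯ (omit j) ⋯ dt_{σ(k)}`, written in an abstract algebra `A` containing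
the barycentric coordinates `t i` and their differentials `dt i`. -/
noncomputable def whitneyForm {A : Type*} [Ring A] [Algebra ℝ A] {n : ℕ}
    (t dt : Fin (n + 1) → A) (k : ℕ) (σ : Fin (k + 1) → Fin (n + 1)) : A :=
  (k.factorial : ℝ) • ∑ j : Fin (k + 1), ((-1 : ℝ) ^ (j : ℕ)) •
    (t (σ j) * ((List.ofFn fun l : Fin (k + 1) => dt (σ l)).eraseIdx j).prod)

section aux
variable {A : Type*} [Ring A] [Algebra ℝ A] {n : ℕ}

lemma my_eraseIdx_map {α β : Type*} (f : α → β) :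
    ∀ (L : List α) (j : ℕ), (L.map f).eraseIdx j = (L.eraseIdx j).map f
  | [], _ => rfl
  | _ :: _, 0 => rfl
  | a :: L, j + 1 => by simp [List.eraseIdx, my_eraseIdx_map f L j]

lemma my_Dprod (dt : Fin (n + 1) → A) (D : A →ₗ[ℝ] A) (hD1 : D 1 = 0)
    (hLeib1 : ∀ i a, D (dt i * a) = - (dt i * D a)) :
    ∀ L : List (Fin (n + 1)), D ((L.map dt).prod) = 0
  | [] => by simpa using hD1
  | a :: L => by
    simp [hLeib1, my_Dprod dt D hD1 hLeib1 L]

lemma my_move (dt : Fin (n + 1) → A)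
    (hanti : ∀ i j, dt i * dt j = - (dt j * dt i)) :
    ∀ (L : List (Fin (n + 1))) (j : ℕ) (hj : j < L.length),
      dt (L.get ⟨j, hj⟩) * ((L.eraseIdx j).map dt).prod
        = ((-1 : ℝ) ^ j) • ((L.map dt).prod)
  | a :: L, 0, _ => by simp
  | a :: L, m + 1, hj => by
    have hm : m < L.length := Nat.succ_lt_succ_iff.mp hj
    have ih := my_move dt hanti L m hm
    have : dt (L.get ⟨m, hm⟩) * (dt a * ((L.eraseIdx m).map dt).prod)
        = - (dt a * (dt (L.get ⟨m, hm⟩) * ((L.eraseIdx m).map dt).prod)) := by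
      rw [← mul_assoc, hanti, neg_mul, mul_assoc]
    simp only [List.eraseIdx, List.map_cons, List.prod_cons, List.get_cons_succ,
      List.map_cons, List.prod_cons]
    rw [this, ih, pow_succ, mul_comm, neg_one_mul, neg_smul, mul_smul_comm]

end aux

/-- In the de Rham algebra of the `n`-simplex — abstracted as an
`ℝ`-algebra `A` with elements `t i`, `dt i` and a differential `D` satisfying the
Leibniz rule, `D(tᵢ) = dtᵢ`, `D(dtᵢ) = 0`, subject to the simplex relations
`Σ tᵢ = 1` and `Σ dtᵢ = 0` — the elementary Whitney forms satisfy
`d ω_{i₀…i_k} = Σᵢ ω_{i i₀…i_k}`. -/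
theorem whitneyForm_differential
    (A : Type*) [Ring A] [Algebra ℝ A] (n : ℕ)
    (t dt : Fin (n + 1) → A)
    (D : A →ₗ[ℝ] A)
    (hD1 : D 1 = 0)
    (hDt : ∀ i, D (t i) = dt i)
    (hDdt : ∀ i, D (dt i) = 0)
    (hLeib0 : ∀ i a, D (t i * a) = dt i * a + t i * D a)
    (hLeib1 : ∀ i a, D (dt i * a) = - (dt i * D a))
    (htcomm : ∀ i a, t i * a = a * t i)
    (hanti : ∀ i j, dt i * dt j = - (dt j * dt i))
    (hsum_t : ∑ i, t i = 1)
    (hsum_dt : ∑ i, dt i = 0)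
    (k : ℕ) (σ : Fin (k + 1) → Fin (n + 1)) :
    D (whitneyForm t dt k σ) =
      ∑ i : Fin (n + 1), whitneyForm t dt (k + 1) (Fin.cons i σ) := by
    classical
  set L : List (Fin (n + 1)) := List.ofFn σ with hL
  have hMap : (List.ofFn fun l : Fin (k + 1) => dt (σ l)) = L.map dt := by
    rw [hL, List.map_ofFn]; rfl
  have hLen : L.length = k + 1 := by simp [hL]
  set P : A := (L.map dt).prod with hP
  -- LHS
  have hEj : ∀ j : Fin (k + 1),
      ((List.ofFn fun l : Fin (k + 1) => dt (σ l)).eraseIdx j).prod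
        = ((L.eraseIdx j).map dt).prod := by
    intro j; rw [hMap, my_eraseIdx_map]
  have hget : ∀ j : Fin (k + 1), ∀ hj : (j : ℕ) < L.length,
      L.get ⟨j, hj⟩ = σ j := by
    intro j hj
    exact (List.get_ofFn σ ⟨(j : ℕ), hj⟩).trans (congrArg σ (by ext; simp))
  have lhs_eq : D (whitneyForm t dt k σ)
      = ((k + 1).factorial : ℝ) • P := by
    rw [whitneyForm]
    rw [map_smul, map_sum]
    have : ∀ j : Fin (k + 1),
        D (((-1 : ℝ) ^ (j : ℕ)) •
          (t (σ j) * ((List.ofFn fun l : Fin (k + 1) => dt (σ l)).eraseIdx j).prod))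
        = P := by
      intro j
      rw [map_smul, hEj j, hLeib0, my_Dprod dt D hD1 hLeib1, mul_zero, add_zero]
      have hj : (j : ℕ) < L.length := by rw [hLen]; exact j.isLt
      rw [← hget j hj, my_move dt hanti L j hj, smul_smul, ← pow_add, ← two_mul,
        pow_mul]
      norm_num
      exact hP.symm
    rw [Finset.sum_congr rfl fun j _ => this j]
    rw [Finset.sum_const, Finset.card_univ, Fintype.card_fin,
      ← Nat.cast_smul_eq_nsmul ℝ, smul_smul]
    congr 1
    rw [Nat.factorial_succ]
    push_cast
    ring
  rw [lhs_eq]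
  -- RHS
  have hcons : ∀ i : Fin (n + 1),
      (List.ofFn fun l : Fin (k + 1 + 1) => dt ((Fin.cons i σ : Fin (k + 2) → Fin (n + 1)) l)) = dt i :: L.map dt := by
    intro i
    rw [List.ofFn_succ, ← hMap]
    simp only [Fin.cons_zero, Fin.cons_succ]
  have rhs_term : ∀ i : Fin (n + 1),
      whitneyForm t dt (k + 1) (Fin.cons i σ)
        = ((k + 1).factorial : ℝ) •
          (t i * P + ∑ j : Fin (k + 1), ((-1 : ℝ) ^ ((j : ℕ) + 1)) •
            (t (σ j) * (dt i * ((L.eraseIdx j).map dt).prod))) := by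
    intro i
    rw [whitneyForm]
    congr 1
    rw [Fin.sum_univ_succ]
    congr 1
    · simp only [Fin.val_zero, pow_zero, one_smul, Fin.cons_zero, hcons i,
        List.eraseIdx_cons_zero, hP]
    · apply Finset.sum_congr rfl
      intro j _
      rw [hcons i]
      simp only [Fin.cons_succ, Fin.val_succ]
      congr 2
      show ((dt i :: L.map dt).eraseIdx ((j : ℕ) + 1)).prod = _
      rw [List.eraseIdx_cons_succ, List.prod_cons, my_eraseIdx_map]
  rw [Finset.sum_congr rfl fun i _ => rhs_term i]
  rw [← Finset.smul_sum]
  congr 1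
  rw [Finset.sum_add_distrib, ← Finset.sum_mul, hsum_t, one_mul]
  rw [Finset.sum_comm]
  have : ∀ j : Fin (k + 1),
      ∑ i : Fin (n + 1), ((-1 : ℝ) ^ ((j : ℕ) + 1)) •
        (t (σ j) * (dt i * ((L.eraseIdx j).map dt).prod)) = 0 := by
    intro j
    rw [← Finset.smul_sum, ← Finset.mul_sum, ← Finset.sum_mul, hsum_dt, zero_mul,
      mul_zero, smul_zero]
  rw [Finset.sum_congr rfl fun j _ => this j, Finset.sum_const_zero, add_zero]
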